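/- If φ: G → H is a ×-homotopy equivalence between finite graphs with no isolated vertices (i.e., there is a graph morphism ψ: H → G with φ∘ψ ≃ id_H and ψ∘φ ≃ id_G), then the induced functor φ_*: Π(G) → Π(H) is an equivalence of categories: it is full, faithful, and essentially surjective. In particular, every vertex of H is connected by a walk to a vertex φ(v); every ≡-class of walks from φ(v) to φ(w) in H is φ_* of some ≡-class of walks from v to w in G; and φ∘α ≡ φ∘β in H implies α ≡ β in G. -/

import Mathlib

/-- A graph: vertex type `V` with a symmetric adjacency relation (loops allowed). -/
structure SGraph (V : Type) where
  Adj : V → V → Prop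
  symm : Symmetric Adj

variable {V W X : Type}

/-- `l` is the (nonempty) vertex sequence of a walk in `G`. -/
def IsWalk (G : SGraph V) (l : List V) : Prop :=
  l ≠ [] ∧ l.Chain' G.Adj

/-- `l` is a walk in `G` from `x` to `y`. -/
def IsWalkFrom (G : SGraph V) (x y : V) (l : List V) : Prop :=
  l.Chain' G.Adj ∧ l.head? = some x ∧ l.getLast? = some y

/-- Concatenation of walks sharing an endpoint: follow `l`, then `m`. -/
def wconcat (l m : List V) : List V := l ++ m.tail

/-- A walk is prunable if some vertex `vᵢ` satisfies `vᵢ = vᵢ₊₂`. -/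
def Prunable (l : List V) : Prop :=
  ∃ (p s : List V) (a b : V), l = p ++ a :: b :: a :: s

/-- `m` is obtained from `l` by a single prune (deleting `vᵢ, vᵢ₊₁` when `vᵢ = vᵢ₊₂`). -/
def PruneOf (l m : List V) : Prop :=
  ∃ (p s : List V) (a b : V), l = p ++ a :: b :: a :: s ∧ m = p ++ a :: s

/-- A single prune step (in either direction) between walks of `G`. -/
def PruneStep (G : SGraph V) (l m : List V) : Prop :=
  IsWalk G l ∧ IsWalk G m ∧ (PruneOf l m ∨ PruneOf m l)

/-- Prune equivalence: the equivalence relation on walks of `G` generated by prunes. -/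
def PruneEqv (G : SGraph V) : List V → List V → Prop :=
  Relation.EqvGen (PruneStep G)

/-- A spider move: two walks of `G` of the same length which agree at every index
except (at most) a single interior index. -/
def SpiderStep (G : SGraph V) (l m : List V) : Prop :=
  IsWalk G l ∧ IsWalk G m ∧ l.length = m.length ∧
    ∃ i : ℕ, 0 < i ∧ i + 1 < l.length ∧ ∀ j : ℕ, j ≠ i → l[j]? = m[j]?

/-- Homotopy rel endpoints (`≡`): the equivalence relation on walks of `G`
generated by prunes and spider moves. -/
def HomEqv (G : SGraph V) : List V → List V → Prop :=
  Relation.EqvGen (fun l m => PruneStep G l m ∨ SpiderStep G l m)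

/-- A graph morphism. -/
def IsHom (G : SGraph V) (H : SGraph W) (f : V → W) : Prop :=
  ∀ {u v : V}, G.Adj u v → H.Adj (f u) (f v)

/-- One step of a ×-homotopy between graph morphisms. -/
def HtpyStep (G : SGraph V) (H : SGraph W) (f g : V → W) : Prop :=
  IsHom G H f ∧ IsHom G H g ∧ ∀ u v, G.Adj u v → H.Adj (f u) (g v)

/-- ×-homotopy of graph morphisms. -/
def Homotopic (G : SGraph V) (H : SGraph W) : (V → W) → (V → W) → Prop :=
  Relation.ReflTransGen (HtpyStep G H)


set_option linter.deprecated false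

theorem List.chain'_append {α : Type} {R : α → α → Prop} {l₁ l₂ : List α} :
    List.Chain' R (l₁ ++ l₂) ↔ List.Chain' R l₁ ∧ List.Chain' R l₂ ∧
      ∀ x ∈ l₁.getLast?, ∀ y ∈ l₂.head?, R x y :=
  List.isChain_append

theorem List.chain'_reverse {α : Type} {R : α → α → Prop} {l : List α} :
    List.Chain' R l.reverse ↔ List.Chain' (fun a b => R b a) l :=
  List.isChain_reverse

theorem List.chain'_cons {α : Type} {R : α → α → Prop} {x y : α} {l : List α} :
    List.Chain' R (x :: y :: l) ↔ R x y ∧ List.Chain' R (y :: l) :=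
  List.isChain_cons_cons

theorem List.chain'_map {α β : Type} {R : α → α → Prop} (f : β → α) {l : List β} :
    List.Chain' R (l.map f) ↔ List.Chain' (fun a b : β => R (f a) (f b)) l :=
  List.isChain_map f

@[simp]
theorem List.chain'_singleton {α : Type} {R : α → α → Prop} (a : α) : List.Chain' R [a] :=
  List.isChain_singleton a

theorem List.Chain'.imp {α : Type} {R S : α → α → Prop} (H : ∀ a b, R a b → S a b)
    {l : List α} (h : List.Chain' R l) : List.Chain' S l :=
  List.IsChain.imp H h

theorem List.Chain'.tail {α : Type} {R : α → α → Prop} {l : List α}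
    (h : List.Chain' R l) : List.Chain' R l.tail :=
  List.IsChain.tail h

section Lemmas

variable {G : SGraph V} {H : SGraph W}

lemma IsWalkFrom.ne_nil {x y : V} {l : List V} (h : IsWalkFrom G x y l) : l ≠ [] := by
  intro hl; rw [hl] at h; simp [IsWalkFrom] at h

lemma IsWalkFrom.isWalk {x y : V} {l : List V} (h : IsWalkFrom G x y l) : IsWalk G l :=
  ⟨h.ne_nil, h.1⟩

lemma wconcat_assoc {a b c : List V} (hb : b ≠ []) :
    wconcat (wconcat a b) c = wconcat a (wconcat b c) := by
  cases b with
  | nil => simp at hb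
  | cons x t => simp [wconcat, List.append_assoc]

lemma head?_wconcat {a b : List V} (ha : a ≠ []) : (wconcat a b).head? = a.head? := by
  cases a with
  | nil => simp at ha
  | cons x t => simp [wconcat]

lemma getLast?_wconcat {a b : List V} {x : V} (hab : a.getLast? = b.head?)
    (hb : b.head? = some x) : (wconcat a b).getLast? = b.getLast? := by
  cases b with
  | nil => simp at hb
  | cons y t =>
    simp at hb; subst hb
    cases t with
    | nil =>
      simp only [wconcat, List.tail_cons, List.append_nil, List.getLast?_singleton]
      simp at hab
      exact hab
    | cons z s =>
      simp only [wconcat, List.tail_cons, List.getLast?_append, List.getLast?_cons_cons]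
      cases h : (z :: s).getLast? with
      | none => simp at h
      | some u => simp

lemma wconcat_isWalkFrom {x y z : V} {l m : List V} (hl : IsWalkFrom G x y l)
    (hm : IsWalkFrom G y z m) : IsWalkFrom G x z (wconcat l m) := by
  obtain ⟨cl, hl1, hl2⟩ := hl
  obtain ⟨cm, hm1, hm2⟩ := hm
  refine ⟨?_, ?_, ?_⟩
  · rw [wconcat, List.chain'_append]
    refine ⟨cl, cm.tail, ?_⟩
    intro u hu v hv
    rw [hl2] at hu; simp at hu; subst hu
    cases m with
    | nil => simp at hv
    | cons a t =>
      simp at hm1; subst hm1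
      cases t with
      | nil => simp at hv
      | cons b s =>
        simp at hv; subst hv
        exact (List.chain'_cons.mp cm).1
  · rw [head?_wconcat (by intro h; rw [h] at hl1; simp at hl1), hl1]
  · rw [getLast?_wconcat (hl2.trans hm1.symm) hm1, hm2]

lemma wconcat_singleton_right {l : List V} (x : V) : wconcat l [x] = l := by
  simp [wconcat]

lemma wconcat_singleton_left {l : List V} {x : V} (h : l.head? = some x) :
    wconcat [x] l = l := by
  cases l with
  | nil => simp at h
  | cons a t => simp at h; subst h; simp [wconcat]

end Lemmas
section Lemmas2

variable {G : SGraph V} {H : SGraph W}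

lemma PruneOf.head_last {l m : List V} (h : PruneOf l m) :
    l.head? = m.head? ∧ l.getLast? = m.getLast? := by
  obtain ⟨p, s, a, b, hl, hm⟩ := h
  subst hl hm
  constructor
  · cases p with
    | nil => simp
    | cons x t => simp
  · rw [List.getLast?_append, List.getLast?_append]
    cases s with
    | nil => simp
    | cons z t =>
      cases h : (z :: t).getLast? with
      | none => simp at h
      | some u => simp

lemma step_head_last {l m : List V}
    (h : PruneStep G l m ∨ SpiderStep G l m) :
    l.head? = m.head? ∧ l.getLast? = m.getLast? := by
  rcases h with ⟨_, _, h | h⟩ | ⟨hl, hm, hlen, i, hi0, hi1, hj⟩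
  · exact h.head_last
  · exact ⟨h.head_last.1.symm, h.head_last.2.symm⟩
  · constructor
    · have := hj 0 (by omega)
      rwa [← List.head?_eq_getElem?, ← List.head?_eq_getElem?] at this
    · have hne : l.length - 1 ≠ i := by omega
      have := hj (l.length - 1) hne
      rw [List.getLast?_eq_getElem?, List.getLast?_eq_getElem?, hlen] at *
      exact this

lemma step_isWalk {l m : List V}
    (h : PruneStep G l m ∨ SpiderStep G l m) : IsWalk G l ∧ IsWalk G m := by
  rcases h with ⟨hl, hm, _⟩ | ⟨hl, hm, _⟩ <;> exact ⟨hl, hm⟩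

/-- HomEqv is either trivial or relates walks with the same endpoints. -/
lemma homEqv_props {l m : List V} (h : HomEqv G l m) :
    l = m ∨ (IsWalk G l ∧ IsWalk G m ∧ l.head? = m.head? ∧ l.getLast? = m.getLast?) := by
  induction h with
  | rel x y hxy => exact Or.inr ⟨(step_isWalk hxy).1, (step_isWalk hxy).2,
      (step_head_last hxy).1, (step_head_last hxy).2⟩
  | refl => exact Or.inl rfl
  | symm x y _ ih =>
    rcases ih with rfl | ⟨h1, h2, h3, h4⟩
    · exact Or.inl rfl
    · exact Or.inr ⟨h2, h1, h3.symm, h4.symm⟩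
  | trans x y z _ _ ih1 ih2 =>
    rcases ih1 with rfl | ⟨h1, h2, h3, h4⟩
    · exact ih2
    · rcases ih2 with rfl | ⟨h1', h2', h3', h4'⟩
      · exact Or.inr ⟨h1, h2, h3, h4⟩
      · exact Or.inr ⟨h1, h2', h3.trans h3', h4.trans h4'⟩

end Lemmas2
section Lemmas3

variable {G : SGraph V} {H : SGraph W}

lemma isWalk_append_left_congr {p l m : List V} (hpl : IsWalk G (p ++ l))
    (hm : IsWalk G m) (hh : m.head? = l.head?) : IsWalk G (p ++ m) := by
  obtain ⟨hne, hc⟩ := hpl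
  rw [List.chain'_append] at hc
  refine ⟨by simp [hm.1], ?_⟩
  rw [List.chain'_append]
  refine ⟨hc.1, hm.2, ?_⟩
  intro x hx y hy
  rw [hh] at hy
  exact hc.2.2 x hx y hy

lemma isWalk_append_right_congr {l m t : List V} (hlt : IsWalk G (l ++ t))
    (hm : IsWalk G m) (hh : m.getLast? = l.getLast?) : IsWalk G (m ++ t) := by
  obtain ⟨hne, hc⟩ := hlt
  rw [List.chain'_append] at hc
  refine ⟨by simp [hm.1], ?_⟩
  rw [List.chain'_append]
  refine ⟨hm.2, hc.2.1, ?_⟩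
  intro x hx y hy
  rw [hh] at hx
  exact hc.2.2 x hx y hy

lemma spider_single {p R : List V} {a b : V} (hl : IsWalk G (p ++ a :: R))
    (hm : IsWalk G (p ++ b :: R)) (hp : p ≠ []) (hR : R ≠ []) :
    SpiderStep G (p ++ a :: R) (p ++ b :: R) := by
  refine ⟨hl, hm, by simp, p.length, by simp [List.length_pos_iff, hp], ?_, ?_⟩
  · have : 0 < R.length := List.length_pos_iff.mpr hR
    simp; omega
  · intro j hj
    rw [List.getElem?_append, List.getElem?_append]
    by_cases h : j < p.length
    · simp [h]
    · have hk : j - p.length ≠ 0 := by omega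
      obtain ⟨k, hk⟩ := Nat.exists_eq_succ_of_ne_zero hk
      simp [h, hk]

lemma step_append_left {l m : List V} (p : List V)
    (h : PruneStep G l m ∨ SpiderStep G l m) (hpl : IsWalk G (p ++ l)) :
    PruneStep G (p ++ l) (p ++ m) ∨ SpiderStep G (p ++ l) (p ++ m) := by
  have hpm : IsWalk G (p ++ m) :=
    isWalk_append_left_congr hpl (step_isWalk h).2 (step_head_last h).1.symm
  rcases h with ⟨hl, hm, hp | hp⟩ | ⟨hl, hm, hlen, i, hi0, hi1, hj⟩
  · obtain ⟨q, s, a, b, h1, h2⟩ := hp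
    exact Or.inl ⟨hpl, hpm, Or.inl ⟨p ++ q, s, a, b, by simp [h1], by simp [h2]⟩⟩
  · obtain ⟨q, s, a, b, h1, h2⟩ := hp
    exact Or.inl ⟨hpl, hpm, Or.inr ⟨p ++ q, s, a, b, by simp [h1], by simp [h2]⟩⟩
  · refine Or.inr ⟨hpl, hpm, by simp [hlen], p.length + i, by omega, by simp; omega, ?_⟩
    intro j hj'
    rw [List.getElem?_append, List.getElem?_append]
    by_cases h : j < p.length
    · simp [h]
    · simp only [h, if_false]
      exact hj _ (by omega)

lemma step_append_right {l m : List V} (t : List V)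
    (h : PruneStep G l m ∨ SpiderStep G l m) (hlt : IsWalk G (l ++ t)) :
    PruneStep G (l ++ t) (m ++ t) ∨ SpiderStep G (l ++ t) (m ++ t) := by
  have hmt : IsWalk G (m ++ t) :=
    isWalk_append_right_congr hlt (step_isWalk h).2 (step_head_last h).2.symm
  rcases h with ⟨hl, hm, hp | hp⟩ | ⟨hl, hm, hlen, i, hi0, hi1, hj⟩
  · obtain ⟨q, s, a, b, h1, h2⟩ := hp
    exact Or.inl ⟨hlt, hmt, Or.inl ⟨q, s ++ t, a, b, by simp [h1], by simp [h2]⟩⟩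
  · obtain ⟨q, s, a, b, h1, h2⟩ := hp
    exact Or.inl ⟨hlt, hmt, Or.inr ⟨q, s ++ t, a, b, by simp [h1], by simp [h2]⟩⟩
  · refine Or.inr ⟨hlt, hmt, by simp [hlen], i, hi0, by simp; omega, ?_⟩
    intro j hj'
    rw [List.getElem?_append, List.getElem?_append, hlen]
    by_cases h : j < m.length
    · rw [if_pos h, if_pos h]
      exact hj _ hj'
    · simp [h]

end Lemmas3
section Lemmas4

variable {G : SGraph V} {H : SGraph W}

lemma HomEqv.rfl {l : List V} : HomEqv G l l := Relation.EqvGen.refl l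

lemma HomEqv.symm' {l m : List V} (h : HomEqv G l m) : HomEqv G m l :=
  Relation.EqvGen.symm _ _ h

lemma HomEqv.trans' {l m n : List V} (h : HomEqv G l m) (h' : HomEqv G m n) :
    HomEqv G l n := Relation.EqvGen.trans _ _ _ h h'

lemma HomEqv.of_step {l m : List V} (h : PruneStep G l m ∨ SpiderStep G l m) :
    HomEqv G l m := Relation.EqvGen.rel _ _ h

lemma homEqv_append_left {l m : List V} (p : List V) (h : HomEqv G l m)
    (hpl : IsWalk G (p ++ l)) : HomEqv G (p ++ l) (p ++ m) := by
  induction h with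
  | rel x y hxy => exact HomEqv.of_step (step_append_left p hxy hpl)
  | refl x => exact HomEqv.rfl
  | symm x y hxy ih =>
    rcases homEqv_props hxy with rfl | ⟨h1, h2, h3, h4⟩
    · exact HomEqv.rfl
    · exact (ih (isWalk_append_left_congr hpl h1 h3)).symm'
  | trans x y z hxy hyz ih1 ih2 =>
    rcases homEqv_props hxy with rfl | ⟨h1, h2, h3, h4⟩
    · exact ih2 hpl
    · exact (ih1 hpl).trans' (ih2 (isWalk_append_left_congr hpl h2 h3.symm))

lemma homEqv_append_right {l m : List V} (t : List V) (h : HomEqv G l m)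
    (hlt : IsWalk G (l ++ t)) : HomEqv G (l ++ t) (m ++ t) := by
  induction h with
  | rel x y hxy => exact HomEqv.of_step (step_append_right t hxy hlt)
  | refl x => exact HomEqv.rfl
  | symm x y hxy ih =>
    rcases homEqv_props hxy with rfl | ⟨h1, h2, h3, h4⟩
    · exact HomEqv.rfl
    · exact (ih (isWalk_append_right_congr hlt h1 h4)).symm'
  | trans x y z hxy hyz ih1 ih2 =>
    rcases homEqv_props hxy with rfl | ⟨h1, h2, h3, h4⟩
    · exact ih2 hlt
    · exact (ih1 hlt).trans' (ih2 (isWalk_append_right_congr hlt h2 h4.symm))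

end Lemmas4
section Lemmas5

variable {G : SGraph V} {H : SGraph W}

lemma isWalk_wconcat {q l : List V} (hq : IsWalk G q) (hl : IsWalk G l)
    (h : q.getLast? = l.head?) : IsWalk G (wconcat q l) := by
  refine ⟨by simp [wconcat, hq.1], ?_⟩
  rw [wconcat, List.chain'_append]
  refine ⟨hq.2, hl.2.tail, ?_⟩
  intro u hu v hv
  rw [h] at hu
  cases l with
  | nil => simp at hu
  | cons a t =>
    simp at hu; subst hu
    cases t with
    | nil => simp at hv
    | cons b s =>
      simp at hv; subst hv
      exact (List.chain'_cons.mp hl.2).1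

lemma isWalk_reverse {l : List V} (hl : IsWalk G l) : IsWalk G l.reverse := by
  refine ⟨by simp [hl.1], ?_⟩
  rw [List.chain'_reverse]
  exact hl.2.imp (fun a b h => G.symm h)

lemma isWalkFrom_reverse {x y : V} {l : List V} (h : IsWalkFrom G x y l) :
    IsWalkFrom G y x l.reverse := by
  refine ⟨(isWalk_reverse ⟨h.ne_nil, h.1⟩).2, ?_, ?_⟩
  · rw [List.head?_reverse]; exact h.2.2
  · rw [List.getLast?_reverse]; exact h.2.1

lemma wconcat_eq_append {q l : List V} {x : V} (hq : q.getLast? = some x)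
    (hl : l.head? = some x) : wconcat q l = q.dropLast ++ l := by
  have hqne : q ≠ [] := by intro h; rw [h] at hq; simp at hq
  cases l with
  | nil => simp at hl
  | cons a t =>
    simp at hl; subst hl
    conv_lhs => rw [wconcat, ← List.dropLast_append_getLast hqne]
    have : q.getLast hqne = a := by
      rw [List.getLast?_eq_getLast hqne] at hq; simpa using hq
    simp [this]

lemma homEqv_wconcat_left {q l m : List V} (hq : IsWalk G q)
    (hql : q.getLast? = l.head?) (h : HomEqv G l m) :
    HomEqv G (wconcat q l) (wconcat q m) := by
  rcases homEqv_props h with rfl | ⟨h1, h2, h3, h4⟩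
  · exact HomEqv.rfl
  obtain ⟨x, hx⟩ : ∃ x, l.head? = some x := by
    cases l with
    | nil => exact absurd rfl h1.1
    | cons a t => exact ⟨a, rfl⟩
  have hqx : q.getLast? = some x := hql.trans hx
  rw [wconcat_eq_append hqx hx, wconcat_eq_append hqx (h3 ▸ hx)]
  apply homEqv_append_left _ h
  rw [← wconcat_eq_append hqx hx]
  exact isWalk_wconcat hq h1 hql

lemma homEqv_wconcat_right {l m q : List V} (hq : IsWalk G q)
    (hlq : l.getLast? = q.head?) (h : HomEqv G l m) :
    HomEqv G (wconcat l q) (wconcat m q) := by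
  rcases homEqv_props h with rfl | ⟨h1, h2, h3, h4⟩
  · exact HomEqv.rfl
  rw [wconcat, wconcat]
  apply homEqv_append_right _ h
  exact isWalk_wconcat h1 hq hlq

lemma homEqv_wconcat_reverse {l : List V} (hl : IsWalk G l) {x : V}
    (hx : l.head? = some x) : HomEqv G (wconcat l l.reverse) [x] := by
  induction l using List.reverseRecOn with
  | nil => simp at hx
  | append_singleton l' y ih =>
    rcases eq_or_ne l' [] with rfl | h'
    · have hxy : y = x := by simpa using hx
      rw [← hxy]
      have : wconcat ([] ++ [y]) (([] ++ [y] : List V)).reverse = [y] := by simp [wconcat]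
      rw [this]
      exact HomEqv.rfl
    · have hx' : l'.head? = some x := by
        cases l' with
        | nil => exact absurd rfl h'
        | cons a t => simpa using hx
      have hl' : IsWalk G l' := by
        refine ⟨h', ?_⟩
        have := hl.2
        rw [List.chain'_append] at this
        exact this.1
      set d := l'.dropLast with hd
      set a := l'.getLast h' with ha
      have hdec : l' = d ++ [a] := (List.dropLast_append_getLast h').symm
      have e1 : wconcat (l' ++ [y]) (l' ++ [y]).reverse = d ++ a :: y :: a :: d.reverse := by
        rw [wconcat, List.reverse_append]
        conv_lhs => rw [hdec]
        simp [List.reverse_append]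
      have e2 : wconcat l' l'.reverse = d ++ a :: d.reverse := by
        rw [wconcat]
        conv_lhs => rw [hdec]
        simp [List.reverse_append]
      have w1 : IsWalk G (wconcat (l' ++ [y]) (l' ++ [y]).reverse) :=
        isWalk_wconcat hl (isWalk_reverse hl) (by rw [List.head?_reverse])
      have w2 : IsWalk G (wconcat l' l'.reverse) :=
        isWalk_wconcat hl' (isWalk_reverse hl') (by rw [List.head?_reverse])
      have hstep : HomEqv G (wconcat (l' ++ [y]) (l' ++ [y]).reverse)
          (wconcat l' l'.reverse) := by
        apply HomEqv.of_step
        left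
        refine ⟨w1, w2, Or.inl ⟨d, d.reverse, a, y, ?_, ?_⟩⟩
        · exact e1
        · exact e2
      exact hstep.trans' (ih hl' hx')
end Lemmas5
section Lemmas6

variable {G : SGraph V} {H : SGraph W} {f : V → W}

lemma isWalk_map (hf : IsHom G H f) {l : List V} (hl : IsWalk G l) :
    IsWalk H (l.map f) := by
  refine ⟨by simp [hl.1], ?_⟩
  rw [List.chain'_map]
  exact hl.2.imp (fun a b h => hf h)

lemma isWalkFrom_map (hf : IsHom G H f) {x y : V} {l : List V}
    (hl : IsWalkFrom G x y l) : IsWalkFrom H (f x) (f y) (l.map f) := by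
  refine ⟨(isWalk_map hf hl.isWalk).2, ?_, ?_⟩
  · rw [List.head?_map, hl.2.1]; rfl
  · rw [List.getLast?_map, hl.2.2]; rfl

lemma step_map (hf : IsHom G H f) {l m : List V}
    (h : PruneStep G l m ∨ SpiderStep G l m) :
    PruneStep H (l.map f) (m.map f) ∨ SpiderStep H (l.map f) (m.map f) := by
  rcases h with ⟨hl, hm, hp | hp⟩ | ⟨hl, hm, hlen, i, hi0, hi1, hj⟩
  · obtain ⟨q, s, a, b, h1, h2⟩ := hp
    exact Or.inl ⟨isWalk_map hf hl, isWalk_map hf hm,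
      Or.inl ⟨q.map f, s.map f, f a, f b, by simp [h1], by simp [h2]⟩⟩
  · obtain ⟨q, s, a, b, h1, h2⟩ := hp
    exact Or.inl ⟨isWalk_map hf hl, isWalk_map hf hm,
      Or.inr ⟨q.map f, s.map f, f a, f b, by simp [h1], by simp [h2]⟩⟩
  · refine Or.inr ⟨isWalk_map hf hl, isWalk_map hf hm, by simp [hlen],
      i, hi0, by simpa using hi1, ?_⟩
    intro j hj'
    rw [List.getElem?_map, List.getElem?_map, hj j hj']

lemma homEqv_map (hf : IsHom G H f) {l m : List V} (h : HomEqv G l m) :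
    HomEqv H (l.map f) (m.map f) := by
  induction h with
  | rel x y hxy => exact HomEqv.of_step (step_map hf hxy)
  | refl x => exact HomEqv.rfl
  | symm x y _ ih => exact ih.symm'
  | trans x y z _ _ ih1 ih2 => exact ih1.trans' ih2

lemma homEqv_cancel_left {q X Y : List V} {a b : V} (hq : IsWalkFrom G a b q)
    (hX : IsWalk G X) (hY : IsWalk G Y) (hXb : X.head? = some b)
    (hYb : Y.head? = some b) (h : HomEqv G (wconcat q X) (wconcat q Y)) :
    HomEqv G X Y := by
  have hqne : q ≠ [] := hq.ne_nil
  have hrq : IsWalkFrom G b a q.reverse := isWalkFrom_reverse hq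
  have c1 : HomEqv G (wconcat q.reverse q) [b] := by
    have := homEqv_wconcat_reverse (isWalk_reverse hq.isWalk) (x := b)
      (by rw [List.head?_reverse, hq.2.2])
    rwa [List.reverse_reverse] at this
  have hlast : (wconcat q.reverse q).getLast? = some b := by
    rw [getLast?_wconcat (hrq.2.2.trans hq.2.1.symm) hq.2.1, hq.2.2]
  have s1 : HomEqv G (wconcat (wconcat q.reverse q) X) (wconcat [b] X) :=
    homEqv_wconcat_right hX (hlast.trans hXb.symm) c1
  have s1' : HomEqv G (wconcat (wconcat q.reverse q) Y) (wconcat [b] Y) :=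
    homEqv_wconcat_right hY (hlast.trans hYb.symm) c1
  have eA : wconcat (wconcat q.reverse q) X = wconcat q.reverse (wconcat q X) :=
    wconcat_assoc hqne
  have eA' : wconcat (wconcat q.reverse q) Y = wconcat q.reverse (wconcat q Y) :=
    wconcat_assoc hqne
  have s2 : HomEqv G (wconcat q.reverse (wconcat q X)) (wconcat q.reverse (wconcat q Y)) := by
    apply homEqv_wconcat_left (isWalk_reverse hq.isWalk) _ h
    rw [head?_wconcat hqne, hrq.2.2, hq.2.1]
  rw [wconcat_singleton_left hXb] at s1
  rw [wconcat_singleton_left hYb] at s1'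
  exact ((eA ▸ s1).symm').trans' (s2.trans' (eA' ▸ s1'))

lemma homEqv_cancel_right {X Y q : List V} {b c : V} (hq : IsWalkFrom G b c q)
    (hX : IsWalk G X) (hY : IsWalk G Y) (hXb : X.getLast? = some b)
    (hYb : Y.getLast? = some b) (h : HomEqv G (wconcat X q) (wconcat Y q)) :
    HomEqv G X Y := by
  have hqne : q ≠ [] := hq.ne_nil
  have c2 : HomEqv G (wconcat q q.reverse) [b] :=
    homEqv_wconcat_reverse hq.isWalk hq.2.1
  have s1 : HomEqv G (wconcat X [b]) (wconcat X (wconcat q q.reverse)) :=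
    homEqv_wconcat_left hX (by simp [hXb]) c2.symm'
  have s1' : HomEqv G (wconcat Y [b]) (wconcat Y (wconcat q q.reverse)) :=
    homEqv_wconcat_left hY (by simp [hYb]) c2.symm'
  have eA : wconcat X (wconcat q q.reverse) = wconcat (wconcat X q) q.reverse :=
    (wconcat_assoc hqne).symm
  have eA' : wconcat Y (wconcat q q.reverse) = wconcat (wconcat Y q) q.reverse :=
    (wconcat_assoc hqne).symm
  have s2 : HomEqv G (wconcat (wconcat X q) q.reverse) (wconcat (wconcat Y q) q.reverse) := by
    apply homEqv_wconcat_right (isWalk_reverse hq.isWalk) _ h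
    rw [getLast?_wconcat (hXb.trans hq.2.1.symm) hq.2.1, hq.2.2, List.head?_reverse, hq.2.2]
  rw [wconcat_singleton_right] at s1 s1'
  exact s1.trans' ((eA ▸ s2).trans' (eA' ▸ s1'.symm'))

end Lemmas6
section Lemmas7

variable {G : SGraph V} {H : SGraph W}

lemma htpyStep_nat {f g : V → W} (h : HtpyStep G H f g)
    (hG : ∀ v : V, ∃ u, G.Adj v u) :
    ∃ s : V → List W, (∀ v, IsWalkFrom H (f v) (g v) (s v)) ∧
      ∀ (l : List V) (x y : V), IsWalkFrom G x y l →
        HomEqv H (wconcat (l.map f) (s y)) (wconcat (s x) (l.map g)) := by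
  obtain ⟨hf, hg, hst⟩ := h
  choose n hn using hG
  refine ⟨fun v => [f v, g (n v), g v], ?_, ?_⟩
  · intro v
    refine ⟨?_, rfl, rfl⟩
    simp only [List.chain'_cons, List.chain'_singleton, and_true]
    exact ⟨hst v (n v) (hn v), hg (G.symm (hn v))⟩
  · have hswalk : ∀ v, IsWalkFrom H (f v) (g v) [f v, g (n v), g v] := by
      intro v
      refine ⟨?_, rfl, rfl⟩
      simp only [List.chain'_cons, List.chain'_singleton, and_true]
      exact ⟨hst v (n v) (hn v), hg (G.symm (hn v))⟩
    intro l
    induction l with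
    | nil => intro x y hl; simp [IsWalkFrom] at hl
    | cons x0 t ih =>
      intro x y hl
      have hx0 : x0 = x := by have := hl.2.1; simpa using this
      subst hx0
      cases t with
      | nil =>
        have hxy : x0 = y := by have := hl.2.2; simpa using this
        subst hxy
        have e1 : wconcat (List.map f [x0]) [f x0, g (n x0), g x0]
            = [f x0, g (n x0), g x0] := by simp [wconcat]
        have e2 : wconcat [f x0, g (n x0), g x0] (List.map g [x0])
            = [f x0, g (n x0), g x0] := by simp [wconcat]
        rw [e1, e2]
        exact HomEqv.rfl
      | cons x' r =>
        have hc := List.chain'_cons.mp hl.1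
        have hxx' : G.Adj x0 x' := hc.1
        have hl' : IsWalkFrom G x' y (x' :: r) := by
          refine ⟨hc.2, rfl, ?_⟩
          have := hl.2.2
          rwa [List.getLast?_cons_cons] at this
        have ihl := ih x' y hl'
        -- walkness facts
        have wfl : IsWalkFrom H (f x0) (f y) (List.map f (x0 :: x' :: r)) :=
          isWalkFrom_map hf hl
        have wfl' : IsWalkFrom H (f x') (f y) (List.map f (x' :: r)) :=
          isWalkFrom_map hf hl'
        have wgl' : IsWalkFrom H (g x') (g y) (List.map g (x' :: r)) :=
          isWalkFrom_map hg hl'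
        have wLHS : IsWalk H (wconcat (List.map f (x0 :: x' :: r)) [f y, g (n y), g y]) :=
          isWalk_wconcat wfl.isWalk (hswalk y).isWalk (by rw [wfl.2.2]; rfl)
        have eL : wconcat (List.map f (x0 :: x' :: r)) [f y, g (n y), g y]
            = [f x0] ++ wconcat (List.map f (x' :: r)) [f y, g (n y), g y] := by
          simp [wconcat]
        have step0 : HomEqv H
            ([f x0] ++ wconcat (List.map f (x' :: r)) [f y, g (n y), g y])
            ([f x0] ++ wconcat [f x', g (n x'), g x'] (List.map g (x' :: r))) := by
          apply homEqv_append_left _ ihl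
          rw [← eL]; exact wLHS
        have eB : [f x0] ++ wconcat [f x', g (n x'), g x'] (List.map g (x' :: r))
            = [f x0, f x'] ++ g (n x') :: List.map g (x' :: r) := by
          simp [wconcat]
        -- walks L1 L2 L3
        have wgx'r := wgl'.isWalk
        have wL1 : IsWalk H ([f x0, f x'] ++ g (n x') :: List.map g (x' :: r)) := by
          refine ⟨by simp, ?_⟩
          have : ([f x0, f x'] ++ g (n x') :: List.map g (x' :: r))
              = [f x0, f x', g (n x')] ++ List.map g (x' :: r) := by simp
          rw [this, List.chain'_append]
          refine ⟨?_, wgx'r.2, ?_⟩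
          · simp only [List.chain'_cons, List.chain'_singleton, and_true]
            exact ⟨hf hxx', hst x' (n x') (hn x')⟩
          · intro u hu v hv
            simp at hu hv
            subst hu; subst hv
            exact hg (G.symm (hn x'))
        have wL2 : IsWalk H ([f x0, f x'] ++ g x0 :: List.map g (x' :: r)) := by
          refine ⟨by simp, ?_⟩
          have : ([f x0, f x'] ++ g x0 :: List.map g (x' :: r))
              = [f x0, f x', g x0] ++ List.map g (x' :: r) := by simp
          rw [this, List.chain'_append]
          refine ⟨?_, wgx'r.2, ?_⟩
          · simp only [List.chain'_cons, List.chain'_singleton, and_true]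
            exact ⟨hf hxx', hst x' x0 (G.symm hxx')⟩
          · intro u hu v hv
            simp at hu hv
            subst hu; subst hv
            exact hg hxx'
        have wL3 : IsWalk H ([f x0] ++ g (n x0) :: (g x0 :: List.map g (x' :: r))) := by
          refine ⟨by simp, ?_⟩
          have : ([f x0] ++ g (n x0) :: (g x0 :: List.map g (x' :: r)))
              = [f x0, g (n x0), g x0] ++ List.map g (x' :: r) := by simp
          rw [this, List.chain'_append]
          refine ⟨?_, wgx'r.2, ?_⟩
          · simp only [List.chain'_cons, List.chain'_singleton, and_true]
            exact ⟨hst x0 (n x0) (hn x0), hg (G.symm (hn x0))⟩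
          · intro u hu v hv
            simp at hu hv
            subst hu; subst hv
            exact hg hxx'
        have step1 : HomEqv H ([f x0, f x'] ++ g (n x') :: List.map g (x' :: r))
            ([f x0, f x'] ++ g x0 :: List.map g (x' :: r)) :=
          HomEqv.of_step (Or.inr (spider_single wL1 wL2 (by simp) (by simp)))
        have e23 : [f x0, f x'] ++ g x0 :: List.map g (x' :: r)
            = [f x0] ++ f x' :: (g x0 :: List.map g (x' :: r)) := by simp
        have wL2' : IsWalk H ([f x0] ++ f x' :: (g x0 :: List.map g (x' :: r))) := by
          rw [← e23]; exact wL2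
        have step2 : HomEqv H ([f x0] ++ f x' :: (g x0 :: List.map g (x' :: r)))
            ([f x0] ++ g (n x0) :: (g x0 :: List.map g (x' :: r))) :=
          HomEqv.of_step (Or.inr (spider_single wL2' wL3 (by simp) (by simp)))
        have eR : wconcat [f x0, g (n x0), g x0] (List.map g (x0 :: x' :: r))
            = [f x0] ++ g (n x0) :: (g x0 :: List.map g (x' :: r)) := by
          simp [wconcat]
        rw [eL, eR]
        exact step0.trans' ((eB ▸ step1).trans' (e23 ▸ step2))

lemma homotopic_nat {f g : V → W} (hG : ∀ v : V, ∃ u, G.Adj v u)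
    (h : Homotopic G H f g) :
    ∃ s : V → List W, (∀ v, IsWalkFrom H (f v) (g v) (s v)) ∧
      ∀ (l : List V) (x y : V), IsWalkFrom G x y l →
        HomEqv H (wconcat (l.map f) (s y)) (wconcat (s x) (l.map g)) := by
  induction h using Relation.ReflTransGen.head_induction_on with
  | refl =>
    refine ⟨fun v => [g v], fun v => ⟨by simp, rfl, rfl⟩, ?_⟩
    intro l x y hl
    have hne : l ≠ [] := hl.ne_nil
    have e1 : wconcat (l.map g) [g y] = l.map g := wconcat_singleton_right _
    have e2 : wconcat [g x] (l.map g) = l.map g :=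
      wconcat_singleton_left (by rw [List.head?_map, hl.2.1]; rfl)
    rw [e1, e2]
    exact HomEqv.rfl
  | head hstep hrest ih =>
    rename_i fa fc
    obtain ⟨s', hs'1, hs'2⟩ := ih
    obtain ⟨t, ht1, ht2⟩ := htpyStep_nat hstep hG
    refine ⟨fun v => wconcat (t v) (s' v),
      fun v => wconcat_isWalkFrom (ht1 v) (hs'1 v), ?_⟩
    intro l x y hl
    have hlne : l ≠ [] := hl.ne_nil
    have htne : ∀ v, t v ≠ [] := fun v => (ht1 v).ne_nil
    have hsne : ∀ v, s' v ≠ [] := fun v => (hs'1 v).ne_nil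
    have hmapne : l.map fc ≠ [] := by simp [hlne]
    have wfl := isWalkFrom_map hstep.1 hl
    have wf'l := isWalkFrom_map hstep.2.1 hl
    have e1 : wconcat (l.map fa) (wconcat (t y) (s' y))
        = wconcat (wconcat (l.map fa) (t y)) (s' y) := (wconcat_assoc (htne y)).symm
    have c1 : HomEqv H (wconcat (wconcat (l.map fa) (t y)) (s' y))
        (wconcat (wconcat (t x) (l.map fc)) (s' y)) := by
      apply homEqv_wconcat_right (hs'1 y).isWalk _ (ht2 l x y hl)
      rw [getLast?_wconcat (wfl.2.2.trans (ht1 y).2.1.symm) (ht1 y).2.1,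
        (ht1 y).2.2, (hs'1 y).2.1]
    have e2 : wconcat (wconcat (t x) (l.map fc)) (s' y)
        = wconcat (t x) (wconcat (l.map fc) (s' y)) := wconcat_assoc hmapne
    have c2 : HomEqv H (wconcat (t x) (wconcat (l.map fc) (s' y)))
        (wconcat (t x) (wconcat (s' x) (l.map g))) := by
      apply homEqv_wconcat_left (ht1 x).isWalk _ (hs'2 l x y hl)
      rw [head?_wconcat hmapne, wf'l.2.1, (ht1 x).2.2]
    have e3 : wconcat (t x) (wconcat (s' x) (l.map g))
        = wconcat (wconcat (t x) (s' x)) (l.map g) := (wconcat_assoc (hsne x)).symm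
    rw [e1, ← e3]
    exact (c1.trans' (e2 ▸ c2))

end Lemmas7

/-- a ×-homotopy equivalence between finite graphs with no isolated
vertices induces an equivalence of fundamental groupoids: essentially surjective,
full and faithful. -/
theorem stmt12 [Fintype V] [Fintype W] (G : SGraph V) (H : SGraph W)
    (hG : ∀ v : V, ∃ u, G.Adj v u) (hH : ∀ w : W, ∃ u, H.Adj w u)
    (φ : V → W) (ψ : W → V) (hφ : IsHom G H φ) (hψ : IsHom H G ψ)
    (h1 : Homotopic H H (φ ∘ ψ) id) (h2 : Homotopic G G (ψ ∘ φ) id) :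
    (∀ h : W, ∃ (v : V) (l : List W), IsWalkFrom H h (φ v) l) ∧
    (∀ (v w : V) (β : List W), IsWalkFrom H (φ v) (φ w) β →
      ∃ α : List V, IsWalkFrom G v w α ∧ HomEqv H (α.map φ) β) ∧
    (∀ (v w : V) (α β : List V), IsWalkFrom G v w α → IsWalkFrom G v w β →
      HomEqv H (α.map φ) (β.map φ) → HomEqv G α β) := by
  obtain ⟨sH, hsH1, hsH2⟩ := homotopic_nat hH h1
  obtain ⟨sG, hsG1, hsG2⟩ := homotopic_nat hG h2
  have hsG1' : ∀ u, IsWalkFrom G (ψ (φ u)) u (sG u) := fun u => hsG1 u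
  have hsH1' : ∀ u, IsWalkFrom H (φ (ψ u)) u (sH u) := fun u => hsH1 u
  have hψφ : IsHom G G (ψ ∘ φ) := fun h => hψ (hφ h)
  have hφψ : IsHom H H (φ ∘ ψ) := fun h => hφ (hψ h)
  refine ⟨?_, ?_, ?_⟩
  · -- essential surjectivity
    intro h
    exact ⟨ψ h, (sH h).reverse, isWalkFrom_reverse (hsH1' h)⟩
  · -- fullness
    intro v w β hβ
    have hψβ : IsWalkFrom G (ψ (φ v)) (ψ (φ w)) (β.map ψ) := isWalkFrom_map hψ hβ
    have r1 : IsWalkFrom G v (ψ (φ v)) (sG v).reverse := isWalkFrom_reverse (hsG1' v)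
    set α := wconcat (wconcat (sG v).reverse (β.map ψ)) (sG w) with hαdef
    have hαw : IsWalkFrom G v w α :=
      wconcat_isWalkFrom (wconcat_isWalkFrom r1 hψβ) (hsG1' w)
    -- Step A : HomEqv G (α.map (ψ∘φ)) (β.map ψ)
    have nα := hsG2 α v w hαw
    rw [List.map_id] at nα
    have wloop : IsWalkFrom G (ψ (φ v)) (ψ (φ v)) (wconcat (sG v) (sG v).reverse) :=
      wconcat_isWalkFrom (hsG1' v) r1
    have wmid : IsWalkFrom G (ψ (φ v)) (ψ (φ w))
        (wconcat (wconcat (sG v) (sG v).reverse) (β.map ψ)) :=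
      wconcat_isWalkFrom wloop hψβ
    have c : HomEqv G (wconcat (sG v) (sG v).reverse) [ψ (φ v)] :=
      homEqv_wconcat_reverse (hsG1' v).isWalk (hsG1' v).2.1
    have d1 : HomEqv G (wconcat (wconcat (sG v) (sG v).reverse) (β.map ψ)) (β.map ψ) := by
      have := homEqv_wconcat_right hψβ.isWalk
        (wloop.2.2.trans hψβ.2.1.symm) c
      rwa [wconcat_singleton_left hψβ.2.1] at this
    have d2 : HomEqv G (wconcat (wconcat (wconcat (sG v) (sG v).reverse) (β.map ψ)) (sG w))
        (wconcat (β.map ψ) (sG w)) :=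
      homEqv_wconcat_right (hsG1' w).isWalk (wmid.2.2.trans (hsG1' w).2.1.symm) d1
    have hrevne : (sG v).reverse ≠ [] := r1.ne_nil
    have hmidne : wconcat (sG v).reverse (β.map ψ) ≠ [] := by
      simp [wconcat, hrevne]
    have E : wconcat (sG v) α
        = wconcat (wconcat (wconcat (sG v) (sG v).reverse) (β.map ψ)) (sG w) := by
      rw [hαdef, ← wconcat_assoc hmidne, ← wconcat_assoc hrevne]
    have hA' : HomEqv G (wconcat (α.map (ψ ∘ φ)) (sG w)) (wconcat (β.map ψ) (sG w)) :=
      nα.trans' (E ▸ d2)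
    have hαψφ : IsWalkFrom G (ψ (φ v)) (ψ (φ w)) (α.map (ψ ∘ φ)) := isWalkFrom_map hψφ hαw
    have hA : HomEqv G (α.map (ψ ∘ φ)) (β.map ψ) :=
      homEqv_cancel_right (hsG1' w) hαψφ.isWalk hψβ.isWalk hαψφ.2.2 hψβ.2.2 hA'
    -- Step B
    have hB : HomEqv H ((α.map φ).map (φ ∘ ψ)) (β.map (φ ∘ ψ)) := by
      have := homEqv_map hφ hA
      rw [List.map_map, List.map_map] at this
      rw [List.map_map]
      exact this
    -- Step C
    have hγ : IsWalkFrom H (φ v) (φ w) (α.map φ) := isWalkFrom_map hφ hαw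
    have nγ := hsH2 (α.map φ) (φ v) (φ w) hγ
    rw [List.map_id] at nγ
    have nβ := hsH2 β (φ v) (φ w) hβ
    rw [List.map_id] at nβ
    have hγφψ : IsWalkFrom H (φ (ψ (φ v))) (φ (ψ (φ w))) ((α.map φ).map (φ ∘ ψ)) :=
      isWalkFrom_map hφψ hγ
    have cc : HomEqv H (wconcat ((α.map φ).map (φ ∘ ψ)) (sH (φ w)))
        (wconcat (β.map (φ ∘ ψ)) (sH (φ w))) :=
      homEqv_wconcat_right (hsH1' (φ w)).isWalk
        (hγφψ.2.2.trans (hsH1' (φ w)).2.1.symm) hB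
    have final : HomEqv H (wconcat (sH (φ v)) (α.map φ)) (wconcat (sH (φ v)) β) :=
      nγ.symm'.trans' (cc.trans' nβ)
    exact ⟨α, hαw, homEqv_cancel_left (hsH1' (φ v)) hγ.isWalk hβ.isWalk
      hγ.2.1 hβ.2.1 final⟩
  · -- faithfulness
    intro v w α β hα hβ hfeq
    have hψeq : HomEqv G (α.map (ψ ∘ φ)) (β.map (ψ ∘ φ)) := by
      have := homEqv_map hψ hfeq
      rwa [List.map_map, List.map_map] at this
    have nα := hsG2 α v w hα
    rw [List.map_id] at nα
    have nβ := hsG2 β v w hβ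
    rw [List.map_id] at nβ
    have hαψφ : IsWalkFrom G (ψ (φ v)) (ψ (φ w)) (α.map (ψ ∘ φ)) := isWalkFrom_map hψφ hα
    have cr : HomEqv G (wconcat (α.map (ψ ∘ φ)) (sG w)) (wconcat (β.map (ψ ∘ φ)) (sG w)) :=
      homEqv_wconcat_right (hsG1' w).isWalk (hαψφ.2.2.trans (hsG1' w).2.1.symm) hψeq
    have final : HomEqv G (wconcat (sG v) α) (wconcat (sG v) β) :=
      nα.symm'.trans' (cr.trans' nβ)
    exact homEqv_cancel_left (hsG1' v) hα.isWalk hβ.isWalk hα.2.1 hβ.2.1 final
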